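/- Let G be a group, let A and B be subgroups of G with an isomorphism φ : A ≃ B, and let H = G*_φ be the HNN extension of G along φ with stable letter t, with canonical homomorphism ι : G → H. Then the normal subgroup of H generated by the torsion elements of H equals the normal closure in H of ι(tor₁(G)), which in turn equals the normal closure in H of the image under ι of the set of torsion elements of G. In symbols: tor₁(G*_φ) = ⟪ι(tor₁(G))⟫^{G*_φ} = ⟪ι(tor(G))⟫^{G*_φ}. -/

import Mathlib

/-- `torOne G` is the normal subgroup of `G` generated by the torsion elements. -/
def torOne (G : Type*) [Group G] : Subgroup G :=
  Subgroup.normalClosure {g : G | IsOfFinOrder g}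

namespace TorOneHNNAux

open HNNExtension HNNExtension.NormalWord Subgroup

variable {G : Type*} [Group G] {A B : Subgroup G} {φ : A ≃* B}

private lemma units_int_ne_neg_self (u : ℤˣ) : u ≠ -u := by
  rcases Int.units_eq_one_or u with rfl | rfl <;> decide

private lemma units_int_eq_of_ne_neg {u v : ℤˣ} (h : ¬ u = -v) : u = v := by
  rcases Int.units_eq_one_or u with rfl | rfl <;>
    rcases Int.units_eq_one_or v with rfl | rfl <;> simp_all

private lemma conj_t_zpow (u : ℤˣ) (a : toSubgroup A B u) :
    (t ^ (u : ℤ) : HNNExtension G A B φ) * of (a : G) * (t ^ (u : ℤ))⁻¹ =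
      of (toSubgroupEquiv φ u a : G) := by
  rcases Int.units_eq_one_or u with rfl | rfl
  · simp only [Units.val_one, zpow_one]
    exact (equiv_eq_conj a).symm
  · simp only [Units.val_neg, Units.val_one, zpow_neg, zpow_one, inv_inv]
    erw [equiv_symm_eq_conj a]
    rfl

private lemma aux_prod_replicate {M : Type*} [Monoid M] {α : Type*} (f : α → M)
    (L : List α) (m : ℕ) :
    (((List.replicate m L).flatten).map f).prod = ((L.map f).prod) ^ m := by
  induction m with
  | zero => simp
  | succ m ih =>
    rw [List.replicate_succ, List.flatten_cons, List.map_append, List.prod_append, ih, pow_succ']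

private lemma head?_replicate_join {α : Type*} (M : List α) (m : ℕ) (y : α)
    (hy : y ∈ ((List.replicate m M).flatten).head?) : y ∈ M.head? := by
  induction m with
  | zero => simp at hy
  | succ m ih =>
    rw [List.replicate_succ, List.flatten_cons] at hy
    cases M with
    | nil => exact ih (by rwa [List.nil_append] at hy)
    | cons a M' => simp at hy; simpa using hy

private lemma chain'_replicate_join {α : Type*} {R : α → α → Prop} {M : List α}
    (hM : M.Chain' R) (hlink : ∀ x ∈ M.getLast?, ∀ y ∈ M.head?, R x y) (m : ℕ) :
    ((List.replicate m M).flatten).Chain' R := by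
  induction m with
  | zero => exact List.isChain_nil
  | succ m ih =>
    simp only [List.Chain']
    rw [List.replicate_succ, List.flatten_cons, List.isChain_append]
    exact ⟨hM, ih, fun x hx y hy => hlink x hx y (head?_replicate_join M m y hy)⟩

private lemma length_replicate_join {α : Type*} (M : List α) (m : ℕ) :
    ((List.replicate m M).flatten).length = m * M.length := by
  induction m with
  | zero => simp
  | succ m ih =>
    rw [List.replicate_succ, List.flatten_cons, List.length_append, ih]
    ring

/-- A cyclically reduced word with at least one occurrence of `t` has infinite order. -/
private lemma not_isOfFinOrder_of_cyclically_reduced (φ : A ≃* B)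
    (h0 gk : G) (uk : ℤˣ) (Y : List (ℤˣ × G))
    (chain : (Y ++ [(uk, gk)]).Chain' (fun a b => a.2 ∈ toSubgroup A B a.1 → a.1 = b.1))
    (hnc : ∀ y ∈ (Y ++ [(uk, gk)]).head?, gk * h0 ∈ toSubgroup A B uk → uk = y.1) :
    ¬ IsOfFinOrder ((⟨h0, Y ++ [(uk, gk)], chain⟩ : ReducedWord G A B).prod φ) := by
  intro hfin
  obtain ⟨n, hn0, hn⟩ := isOfFinOrder_iff_pow_eq_one.1 hfin
  set R : ℤˣ × G → ℤˣ × G → Prop := fun a b => a.2 ∈ toSubgroup A B a.1 → a.1 = b.1 with hR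
  have chainR : (Y ++ [(uk, gk)]).Chain' R := chain
  set M : List (ℤˣ × G) := Y ++ [(uk, gk * h0)] with hM
  have hchainM : M.Chain' R := by
    simp only [List.Chain']
    rw [hM, List.isChain_append]
    have hc := List.isChain_append.1 chainR
    refine ⟨hc.1, List.isChain_singleton _, ?_⟩
    intro x hx y hy
    simp only [List.head?_cons, Option.mem_some_iff] at hy
    subst hy
    intro hmem
    exact hc.2.2 x hx (uk, gk) (by simp) hmem
  have hheadM : ∀ y ∈ M.head?, y.1 = (uk, gk * h0).1 ∨ y ∈ (Y ++ [(uk, gk)]).head? := by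
    intro y hy
    cases Y with
    | nil => left; simp [hM] at hy; simp [← hy]
    | cons a Y' => right; simp [hM] at hy; simp [hy]
  have hlink : ∀ x ∈ M.getLast?, ∀ y ∈ M.head?, R x y := by
    intro x hx y hy
    rw [hM, List.getLast?_concat, Option.mem_some_iff] at hx
    subst hx
    intro hmem
    rcases hheadM y hy with h | h
    · exact h.symm
    · exact hnc y h hmem
  -- the reduced word representing `h ^ n * of h0`
  set Fm : ℤˣ × G → HNNExtension G A B φ := fun x => t ^ (x.1 : ℤ) * of x.2 with hFm
  set x : HNNExtension G A B φ := (⟨h0, Y ++ [(uk, gk)], chain⟩ : ReducedWord G A B).prod φ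
    with hx
  have keyM : (M.map Fm).prod = (of h0)⁻¹ * x * of h0 := by
    rw [hx]
    show (M.map Fm).prod =
      (of h0)⁻¹ * (of h0 * (((Y ++ [(uk, gk)]).map Fm).prod)) * of h0
    rw [hM]
    simp [Fm, List.map_append, List.prod_append, map_mul, mul_assoc]
  set wn : ReducedWord G A B :=
    ⟨h0, (List.replicate n M).flatten, chain'_replicate_join hchainM hlink n⟩ with hwn
  have hwnprod : wn.prod φ = of h0 := by
    show of h0 * (((List.replicate n M).flatten).map Fm).prod = of h0
    rw [aux_prod_replicate, keyM]
    have : ((of h0)⁻¹ * x * of h0) ^ n = (of h0)⁻¹ * x ^ n * of h0 := by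
      have := conj_pow (i := n) (a := (of h0)⁻¹) (b := x)
      simpa using this
    rw [this, hn]
    simp
  have hnil : wn.toList = [] :=
    ReducedWord.toList_eq_nil_of_mem_of_range φ wn ⟨h0, hwnprod.symm⟩
  have : ((List.replicate n M).flatten).length = 0 := by
    rw [show (List.replicate n M).flatten = wn.toList from rfl, hnil]
    rfl
  rw [length_replicate_join, hM] at this
  simp only [List.length_append, List.length_cons, List.length_nil] at this
  rcases Nat.mul_eq_zero.1 this with h | h <;> omega

/-- Every element of finite order in an HNN extension is conjugate to an element of the
base group. -/
private lemma exists_conj_of_isOfFinOrder (φ : A ≃* B)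
    {h : HNNExtension G A B φ} (hh : IsOfFinOrder h) :
    ∃ (c : HNNExtension G A B φ) (g : G), h = c * of g * c⁻¹ := by
  obtain ⟨w, hw⟩ : ∃ w : ReducedWord G A B, w.prod φ = h :=
    let d := (NormalWord.TransversalPair.nonempty G A B).some
    ⟨(NormalWord.equiv φ d h).toReducedWord, (NormalWord.equiv φ d).symm_apply_apply h⟩
  suffices H : ∀ (n : ℕ) (w : ReducedWord G A B), w.toList.length = n →
      IsOfFinOrder (w.prod φ) → ∃ c g, w.prod φ = c * HNNExtension.of g * c⁻¹ by
    obtain ⟨c, g, hcg⟩ := H _ w rfl (hw ▸ hh)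
    exact ⟨c, g, hw ▸ hcg⟩
  intro n
  induction n using Nat.strong_induction_on with
  | _ n ih =>
    intro w hlen hfin
    rcases w with ⟨h0, L, chain⟩
    rcases eq_or_ne L [] with rfl | hL
    · exact ⟨1, h0, by simp [ReducedWord.prod]⟩
    obtain ⟨Y, ⟨uk, gk⟩, rfl⟩ : ∃ Y x, L = Y ++ [x] :=
      ⟨_, _, (List.dropLast_append_getLast hL).symm⟩
    rcases Y with _ | ⟨⟨u1, g1⟩, T⟩
    · exact absurd hfin (not_isOfFinOrder_of_cyclically_reduced φ h0 gk uk [] chain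
        (by simp))
    by_cases hcan : uk = -u1 ∧ gk * h0 ∈ toSubgroup A B uk
    · -- cancellation: conjugate to a shorter word
      set Fm : ℤˣ × G → HNNExtension G A B φ := fun x => t ^ (x.1 : ℤ) * of x.2 with hFm
      have chainT : T.Chain' (fun a b => a.2 ∈ toSubgroup A B a.1 → a.1 = b.1) :=
        (List.isChain_append.1 chain.tail).1
      set c0 : G := (toSubgroupEquiv φ uk ⟨gk * h0, hcan.2⟩ : G) with hc0
      set w2 : ReducedWord G A B := ⟨c0 * g1, T, chainT⟩ with hw2
      set y : HNNExtension G A B φ := t ^ (uk : ℤ) * of gk with hy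
      have hconj : w2.prod φ =
          y * ((⟨h0, (u1, g1) :: T ++ [(uk, gk)], chain⟩ : ReducedWord G A B).prod φ) * y⁻¹ := by
        show of (c0 * g1) * (T.map Fm).prod =
          y * (of h0 * (((u1, g1) :: T ++ [(uk, gk)]).map Fm).prod) * y⁻¹
        have hu : (u1 : ℤ) = -(uk : ℤ) := by
          rw [hcan.1]; simp
        rw [map_mul, hc0, ← conj_t_zpow uk ⟨gk * h0, hcan.2⟩]
        simp only [hy, hFm, List.map_cons, List.map_append, List.prod_cons, List.prod_append,
          List.map_nil, List.prod_nil, hu, zpow_neg]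
        simp [map_mul, mul_assoc]
      have hfin2 : IsOfFinOrder (w2.prod φ) := by
        obtain ⟨m, hm0, hm⟩ := isOfFinOrder_iff_pow_eq_one.1 hfin
        refine isOfFinOrder_iff_pow_eq_one.2 ⟨m, hm0, ?_⟩
        rw [hconj, conj_pow, hm, mul_one, mul_inv_cancel]
      obtain ⟨c, g, hcg⟩ := ih T.length
        (by simp only [List.length_cons, List.length_append, List.length_nil] at hlen; omega)
        w2 rfl hfin2
      refine ⟨y⁻¹ * c, g, ?_⟩
      have : (⟨h0, (u1, g1) :: T ++ [(uk, gk)], chain⟩ : ReducedWord G A B).prod φ =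
          y⁻¹ * w2.prod φ * y := by
        rw [hconj]; group
      rw [this, hcg]
      simp [mul_assoc]
    · exact absurd hfin (not_isOfFinOrder_of_cyclically_reduced φ h0 gk uk ((u1, g1) :: T) chain
        (by
          intro y hy hmem
          simp only [List.cons_append, List.head?_cons, Option.mem_some_iff] at hy
          subst hy
          exact units_int_eq_of_ne_neg (fun h => hcan ⟨h, hmem⟩)))

end TorOneHNNAux

/-- Lemma (torsion of an HNN extension): for an HNN extension `H = G*_φ` with canonical
map `ι = HNNExtension.of`, we have
`tor₁(H) = ⟪ι(tor₁ G)⟫^H = ⟪ι(tor G)⟫^H`. -/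
theorem tor_one_hnnExtension {G : Type*} [Group G] (A B : Subgroup G) (φ : A ≃* B) :
    torOne (HNNExtension G A B φ) =
      Subgroup.normalClosure
        ((HNNExtension.of : G →* HNNExtension G A B φ) '' (torOne G : Set G)) ∧
    torOne (HNNExtension G A B φ) =
      Subgroup.normalClosure
        ((HNNExtension.of : G →* HNNExtension G A B φ) '' {g : G | IsOfFinOrder g}) := by
  classical
  set ι : G →* HNNExtension G A B φ := (HNNExtension.of : G →* HNNExtension G A B φ) with hι
  set N2 : Subgroup (HNNExtension G A B φ) :=
    Subgroup.normalClosure (ι '' {g : G | IsOfFinOrder g}) with hN2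
  have hmap : ∀ g : G, IsOfFinOrder g → IsOfFinOrder (ι g) := by
    intro g hg
    obtain ⟨m, hm0, hm⟩ := isOfFinOrder_iff_pow_eq_one.1 hg
    exact isOfFinOrder_iff_pow_eq_one.2 ⟨m, hm0, by rw [← map_pow, hm, map_one]⟩
  haveI : (torOne (HNNExtension G A B φ)).Normal :=
    (Subgroup.normalClosure_normal :
      (Subgroup.normalClosure {g : HNNExtension G A B φ | IsOfFinOrder g}).Normal)
  have e2 : torOne (HNNExtension G A B φ) = N2 := by
    refine le_antisymm ?_ ?_
    · refine Subgroup.normalClosure_le_normal ?_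
      intro h hh
      obtain ⟨c, g, rfl⟩ := TorOneHNNAux.exists_conj_of_isOfFinOrder φ hh
      have hg : IsOfFinOrder (ι g) := by
        obtain ⟨m, hm0, hm⟩ := isOfFinOrder_iff_pow_eq_one.1 hh
        refine isOfFinOrder_iff_pow_eq_one.2 ⟨m, hm0, ?_⟩
        have := conj_pow (i := m) (a := c) (b := ι g)
        rw [this] at hm
        have := congrArg (fun z => c⁻¹ * z * c) hm
        simpa [mul_assoc] using this
      have hgG : IsOfFinOrder g := by
        by_contra hcon
        rw [← orderOf_eq_zero_iff] at hcon
        have horder := orderOf_injective ι (HNNExtension.of_injective φ) g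
        rw [hcon] at horder
        exact orderOf_eq_zero_iff.1 horder hg
      have hmem : ι g ∈ N2 :=
        Subgroup.subset_normalClosure ⟨g, hgG, rfl⟩
      exact Subgroup.normalClosure_normal.conj_mem _ hmem c
    · refine Subgroup.normalClosure_le_normal ?_
      rintro x ⟨g, hg, rfl⟩
      exact Subgroup.subset_normalClosure (hmap g hg)
  have e12 : Subgroup.normalClosure (ι '' (torOne G : Set G)) = N2 := by
    refine le_antisymm ?_ ?_
    · refine Subgroup.normalClosure_le_normal ?_
      rintro x ⟨g, hg, rfl⟩
      haveI : (N2.comap ι).Normal := Subgroup.normalClosure_normal.comap ι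
      have : torOne G ≤ N2.comap ι :=
        Subgroup.normalClosure_le_normal
          (fun g' hg' => Subgroup.subset_normalClosure ⟨g', hg', rfl⟩)
      exact this hg
    · refine Subgroup.normalClosure_le_normal ?_
      rintro x ⟨g, hg, rfl⟩
      exact Subgroup.subset_normalClosure
        ⟨g, Subgroup.subset_normalClosure hg, rfl⟩
  exact ⟨e2.trans e12.symm, e2⟩
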